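/- The C-ELBO factorization (Lemma 2, discrete version): with joint p(X,Z,c|W) = p(c|W;π) ∏_i p(x_i|z_i) p(z_i|c_i) and variational distribution q(Z,c|X) = ∏_i q(z_i|x_i) p(c_i|z_i), the ELBO E_q[log p(X,Z,c|W) − log q(Z,c|X)] equals −log Ω(π) + Σ_i E_{q(z_i|x_i)}[log p(x_i|z_i) − log q(z_i|x_i)] + Σ_i E_{q(z_i|x_i)} Σ_k p(k|z_i)[log p(z_i|k) + log π_k − log p(k|z_i)] + Σ_{i≠j} E_{q(z_i|x_i)} E_{q(z_j|x_j)} Σ_k p(k|z_i) p(k|z_j) W_{ij}. -/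

import Mathlib

set_option maxHeartbeats 1000000

open Finset

section helpers
variable {ι T : Type*} [Fintype ι] [DecidableEq ι] [Fintype T] [DecidableEq T]

omit [DecidableEq T] in
lemma sum_prod_fun (w : ι → T → ℝ) :
    ∑ g : ι → T, ∏ j, w j (g j) = ∏ j, ∑ t, w j t :=
  (Fintype.prod_sum w).symm

omit [DecidableEq T] in
/-- Marginalization of a single-site observable under normalized product weights. -/
lemma marg1 (w : ι → T → ℝ) (hw : ∀ j, ∑ t, w j t = 1) (i : ι) (f : T → ℝ) :
    ∑ g : ι → T, (∏ j, w j (g j)) * f (g i) = ∑ t, w i t * f t := by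
  set u : ι → T → ℝ := Function.update w i (fun t => w i t * f t) with hu
  have hui : u i = fun t => w i t * f t := Function.update_self _ _ _
  have hun : ∀ j, j ≠ i → u j = w j := fun j hj => Function.update_of_ne hj _ _
  have key : ∀ g : ι → T, (∏ j, w j (g j)) * f (g i) = ∏ j, u j (g j) := by
    intro g
    have e1 : ∏ j, w j (g j) = w i (g i) * ∏ j ∈ univ.erase i, w j (g j) :=
      (Finset.mul_prod_erase Finset.univ (fun j => w j (g j)) (Finset.mem_univ i)).symm
    have e2 : ∏ j, u j (g j) = u i (g i) * ∏ j ∈ univ.erase i, u j (g j) :=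
      (Finset.mul_prod_erase Finset.univ (fun j => u j (g j)) (Finset.mem_univ i)).symm
    have e3 : ∏ j ∈ univ.erase i, u j (g j) = ∏ j ∈ univ.erase i, w j (g j) :=
      Finset.prod_congr rfl fun j hj => by rw [hun j (Finset.ne_of_mem_erase hj)]
    rw [e1, e2, e3, hui]; ring
  have e4 : ∑ g : ι → T, (∏ j, w j (g j)) * f (g i) = ∑ g : ι → T, ∏ j, u j (g j) :=
    Finset.sum_congr rfl fun g _ => key g
  rw [e4, sum_prod_fun]
  have e5 : ∏ j, ∑ t, u j t = (∑ t, u i t) * ∏ j ∈ univ.erase i, ∑ t, u j t :=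
    (Finset.mul_prod_erase Finset.univ (fun j => ∑ t, u j t) (Finset.mem_univ i)).symm
  have e6 : ∏ j ∈ univ.erase i, ∑ t, u j t = ∏ j ∈ univ.erase i, ∑ t, w j t :=
    Finset.prod_congr rfl fun j hj => by rw [hun j (Finset.ne_of_mem_erase hj)]
  rw [e5, e6, hui]
  simp [hw]

/-- Marginalization of a two-site observable under normalized product weights. -/
lemma marg2 (w : ι → T → ℝ) (hw : ∀ j, ∑ t, w j t = 1) (i j : ι) (hij : j ≠ i)
    (f : T → T → ℝ) :
    ∑ g : ι → T, (∏ l, w l (g l)) * f (g i) (g j) =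
      ∑ t, ∑ t', (w i t * w j t') * f t t' := by
  have hf : ∀ a b : T, f a b =
      ∑ t, ∑ t', (if a = t then (1:ℝ) else 0) * ((if b = t' then (1:ℝ) else 0) * f t t') := by
    intro a b
    simp [ite_mul, Finset.sum_ite_eq, Finset.mem_univ]
  have inner : ∀ t t', (∑ g : ι → T, (∏ l, w l (g l)) *
      ((if g i = t then (1:ℝ) else 0) * (if g j = t' then (1:ℝ) else 0))) = w i t * w j t' := by
    intro t t'
    set u : ι → T → ℝ := Function.update (Function.update w i
        (fun s => w i s * (if s = t then (1:ℝ) else 0))) j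
        (fun s => w j s * (if s = t' then (1:ℝ) else 0)) with hu
    have huj : u j = fun s => w j s * (if s = t' then (1:ℝ) else 0) := Function.update_self _ _ _
    have hui : u i = fun s => w i s * (if s = t then (1:ℝ) else 0) := by
      rw [hu, Function.update_of_ne hij.symm, Function.update_self]
    have hun : ∀ l, l ≠ i → l ≠ j → u l = w l := fun l h1 h2 => by
      rw [hu, Function.update_of_ne h2, Function.update_of_ne h1]
    have hjmem : j ∈ Finset.univ.erase i := Finset.mem_erase.2 ⟨hij, Finset.mem_univ j⟩
    have key : ∀ g : ι → T, (∏ l, w l (g l)) *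
        ((if g i = t then (1:ℝ) else 0) * (if g j = t' then (1:ℝ) else 0)) = ∏ l, u l (g l) := by
      intro g
      have e1 : ∏ l, w l (g l) = w i (g i) * (w j (g j) *
          ∏ l ∈ (univ.erase i).erase j, w l (g l)) := by
        rw [Finset.mul_prod_erase _ (fun l => w l (g l)) hjmem,
            Finset.mul_prod_erase Finset.univ (fun l => w l (g l)) (Finset.mem_univ i)]
      have e2 : ∏ l, u l (g l) = u i (g i) * (u j (g j) *
          ∏ l ∈ (univ.erase i).erase j, u l (g l)) := by
        rw [Finset.mul_prod_erase _ (fun l => u l (g l)) hjmem,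
            Finset.mul_prod_erase Finset.univ (fun l => u l (g l)) (Finset.mem_univ i)]
      have e3 : ∏ l ∈ (univ.erase i).erase j, u l (g l) =
          ∏ l ∈ (univ.erase i).erase j, w l (g l) :=
        Finset.prod_congr rfl fun l hl => by
          rw [hun l (Finset.ne_of_mem_erase (Finset.mem_of_mem_erase hl))
            (Finset.ne_of_mem_erase hl)]
      rw [e1, e2, e3, hui, huj]; ring
    have e4 : (∑ g : ι → T, (∏ l, w l (g l)) *
        ((if g i = t then (1:ℝ) else 0) * (if g j = t' then (1:ℝ) else 0)))
        = ∑ g : ι → T, ∏ l, u l (g l) := Finset.sum_congr rfl fun g _ => key g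
    rw [e4, sum_prod_fun]
    have e5 : ∏ l, ∑ s, u l s = (∑ s, u i s) * ((∑ s, u j s) *
        ∏ l ∈ (univ.erase i).erase j, ∑ s, u l s) := by
      rw [Finset.mul_prod_erase _ (fun l => ∑ s, u l s) hjmem,
          Finset.mul_prod_erase Finset.univ (fun l => ∑ s, u l s) (Finset.mem_univ i)]
    have e6 : ∏ l ∈ (univ.erase i).erase j, ∑ s, u l s =
        ∏ l ∈ (univ.erase i).erase j, ∑ s, w l s :=
      Finset.prod_congr rfl fun l hl => by
        rw [hun l (Finset.ne_of_mem_erase (Finset.mem_of_mem_erase hl))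
          (Finset.ne_of_mem_erase hl)]
    rw [e5, e6, hui, huj]
    simp [hw, mul_ite, Finset.sum_ite_eq, Finset.mem_univ]
  calc ∑ g : ι → T, (∏ l, w l (g l)) * f (g i) (g j)
      = ∑ g : ι → T, ∑ t, ∑ t', (∏ l, w l (g l)) *
          ((if g i = t then (1:ℝ) else 0) * ((if g j = t' then (1:ℝ) else 0) * f t t')) := by
        refine Finset.sum_congr rfl fun g _ => ?_
        rw [show (∏ l, w l (g l)) * f (g i) (g j) = (∏ l, w l (g l)) *
          (∑ t, ∑ t', (if g i = t then (1:ℝ) else 0) *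
            ((if g j = t' then (1:ℝ) else 0) * f t t')) from by rw [← hf (g i) (g j)]]
        rw [Finset.mul_sum]
        exact Finset.sum_congr rfl fun t _ => by rw [Finset.mul_sum]
    _ = ∑ t, ∑ t', ∑ g : ι → T, (∏ l, w l (g l)) *
          ((if g i = t then (1:ℝ) else 0) * ((if g j = t' then (1:ℝ) else 0) * f t t')) := by
        rw [Finset.sum_comm]
        exact Finset.sum_congr rfl fun t _ => Finset.sum_comm
    _ = ∑ t, ∑ t', (∑ g : ι → T, (∏ l, w l (g l)) *
          ((if g i = t then (1:ℝ) else 0) * (if g j = t' then (1:ℝ) else 0))) * f t t' := by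
        refine Finset.sum_congr rfl fun t _ => Finset.sum_congr rfl fun t' _ => ?_
        rw [Finset.sum_mul]
        exact Finset.sum_congr rfl fun g _ => by ring
    _ = ∑ t, ∑ t', (w i t * w j t') * f t t' :=
        Finset.sum_congr rfl fun t _ => Finset.sum_congr rfl fun t' _ => by rw [inner]

end helpers

/-- The weighting function h_i(c,W) = ∏_{j≠i} exp(W_{ij} δ_{c_i c_j}). -/
noncomputable def weightFn {N K : ℕ} (W : Fin N → Fin N → ℝ)
    (c : Fin N → Fin K) (i : Fin N) : ℝ :=
  ∏ j ∈ Finset.univ.erase i, Real.exp (W i j * (if c i = c j then 1 else 0))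

/-- the C-ELBO factorization of Lemma 2 (finite discrete version).
Joint: p(X,Z,c|W) = p(c|W;π) ∏_i p(x_i|z_i) p(z_i|c_i), with
p(c|W;π) = (1/Ω(π)) ∏_i π_{c_i} h_i(c,W).
Variational: q(Z,c|X) = ∏_i q(z_i|x_i) p(c_i|z_i). -/
theorem celbo_factorization {N K : ℕ} {S : Type*} [Fintype S]
    (hN : 0 < N) (hK : 0 < K)
    (px : Fin N → S → ℝ)      -- p(x_i | z_i)
    (pz : S → Fin K → ℝ)      -- p(z | k)
    (q : Fin N → S → ℝ)       -- q(z_i | x_i)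
    (r : Fin K → S → ℝ)       -- responsibilities p(k | z)
    (π : Fin K → ℝ) (W : Fin N → Fin N → ℝ)
    (hpx : ∀ i z, 0 < px i z) (hpz : ∀ z k, 0 < pz z k)
    (hq : ∀ i z, 0 < q i z) (hqsum : ∀ i, ∑ z, q i z = 1)
    (hr : ∀ k z, 0 < r k z) (hrsum : ∀ z, ∑ k, r k z = 1)
    (hπ : ∀ k, 0 < π k) (hW : ∀ i j, W i j = W j i)
    (Ω : ℝ)
    (hΩ : Ω = ∑ c : Fin N → Fin K, ∏ i, π (c i) * weightFn W c i) :
    (∑ Z : Fin N → S, ∑ c : Fin N → Fin K,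
        (∏ i, q i (Z i) * r (c i) (Z i)) *
          (Real.log ((1 / Ω * ∏ i, π (c i) * weightFn W c i) *
              ∏ i, px i (Z i) * pz (Z i) (c i)) -
            Real.log (∏ i, q i (Z i) * r (c i) (Z i)))) =
      -Real.log Ω +
      (∑ i, ∑ z, q i z * (Real.log (px i z) - Real.log (q i z))) +
      (∑ i, ∑ z, q i z * ∑ k, r k z *
          (Real.log (pz z k) + Real.log (π k) - Real.log (r k z))) +
      (∑ i, ∑ j ∈ Finset.univ.erase i, ∑ z, ∑ z', q i z * q j z' *
          ∑ k, r k z * r k z' * W i j) := by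
  classical
  have hwf : ∀ (c : Fin N → Fin K) (i : Fin N), 0 < weightFn W c i := fun c i =>
    Finset.prod_pos fun j _ => Real.exp_pos _
  have hΩpos : 0 < Ω := by
    rw [hΩ]
    have : Nonempty (Fin N → Fin K) := ⟨fun _ => ⟨0, hK⟩⟩
    exact Finset.sum_pos
      (fun c _ => Finset.prod_pos fun i _ => mul_pos (hπ _) (hwf c i))
      Finset.univ_nonempty
  set w : Fin N → S × Fin K → ℝ := fun i p => q i p.1 * r p.2 p.1 with hw
  set a : Fin N → S × Fin K → ℝ := fun i p =>
    Real.log (π p.2) + Real.log (px i p.1) + Real.log (pz p.1 p.2) -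
      Real.log (q i p.1) - Real.log (r p.2 p.1) with ha
  have hwsum : ∀ i, ∑ p : S × Fin K, w i p = 1 := by
    intro i
    calc ∑ p : S × Fin K, w i p = ∑ z, ∑ k, w i (z, k) := Fintype.sum_prod_type _
      _ = ∑ z, ∑ k, q i z * r k z := by simp only [hw]
      _ = ∑ z, q i z * ∑ k, r k z :=
          Finset.sum_congr rfl fun z _ => (Finset.mul_sum _ _ _).symm
      _ = 1 := by
          rw [Finset.sum_congr rfl fun z _ => by rw [hrsum z, mul_one]]
          exact hqsum i
  -- log expansion
  have hlog : ∀ (Z : Fin N → S) (c : Fin N → Fin K),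
      Real.log ((1 / Ω * ∏ i, π (c i) * weightFn W c i) *
          ∏ i, px i (Z i) * pz (Z i) (c i)) -
        Real.log (∏ i, q i (Z i) * r (c i) (Z i))
      = -Real.log Ω + (∑ i, a i (Z i, c i)) +
        ∑ i, ∑ j ∈ Finset.univ.erase i, W i j * (if c i = c j then (1:ℝ) else 0) := by
    intro Z c
    have h1 : (1:ℝ)/Ω ≠ 0 := one_div_ne_zero hΩpos.ne'
    have hPpos : (0:ℝ) < ∏ i, π (c i) * weightFn W c i :=
      Finset.prod_pos fun i _ => mul_pos (hπ _) (hwf c i)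
    have hQpos : (0:ℝ) < ∏ i, px i (Z i) * pz (Z i) (c i) :=
      Finset.prod_pos fun i _ => mul_pos (hpx _ _) (hpz _ _)
    rw [Real.log_mul (mul_ne_zero h1 hPpos.ne') hQpos.ne', Real.log_mul h1 hPpos.ne',
        one_div, Real.log_inv,
        Real.log_prod (fun i _ => (mul_pos (hπ (c i)) (hwf c i)).ne'),
        Real.log_prod (fun i _ => (mul_pos (hpx i (Z i)) (hpz (Z i) (c i))).ne'),
        Real.log_prod (fun i _ => (mul_pos (hq i (Z i)) (hr (c i) (Z i))).ne')]
    have e1 : ∀ i : Fin N, Real.log (π (c i) * weightFn W c i)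
        = Real.log (π (c i)) +
          ∑ j ∈ Finset.univ.erase i, W i j * (if c i = c j then (1:ℝ) else 0) := by
      intro i
      rw [Real.log_mul (hπ (c i)).ne' (hwf c i).ne']
      congr 1
      simp only [weightFn]
      rw [← Real.exp_sum, Real.log_exp]
    have e2 : ∀ i : Fin N, Real.log (px i (Z i) * pz (Z i) (c i))
        = Real.log (px i (Z i)) + Real.log (pz (Z i) (c i)) :=
      fun i => Real.log_mul (hpx _ _).ne' (hpz _ _).ne'
    have e3 : ∀ i : Fin N, Real.log (q i (Z i) * r (c i) (Z i))
        = Real.log (q i (Z i)) + Real.log (r (c i) (Z i)) :=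
      fun i => Real.log_mul (hq _ _).ne' (hr _ _).ne'
    rw [Finset.sum_congr rfl fun i _ => e1 i, Finset.sum_congr rfl fun i _ => e2 i,
        Finset.sum_congr rfl fun i _ => e3 i]
    simp only [ha]
    simp only [Finset.sum_add_distrib, Finset.sum_sub_distrib]
    ring
  -- conversion to a single sum over pair-valued configurations
  have hequiv : ∀ F : (Fin N → S × Fin K) → ℝ,
      (∑ Z : Fin N → S, ∑ c : Fin N → Fin K, F (fun i => (Z i, c i)))
        = ∑ g : Fin N → S × Fin K, F g := by
    intro F
    calc (∑ Z : Fin N → S, ∑ c : Fin N → Fin K, F (fun i => (Z i, c i)))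
        = ∑ p : (Fin N → S) × (Fin N → Fin K), F (fun i => (p.1 i, p.2 i)) :=
          (Fintype.sum_prod_type (fun p : (Fin N → S) × (Fin N → Fin K) => F (fun i => (p.1 i, p.2 i)))).symm
      _ = ∑ g : Fin N → S × Fin K, F g :=
          Fintype.sum_equiv (Equiv.arrowProdEquivProdArrow (Fin N) (fun _ => S) (fun _ => Fin K)).symm _ _
            (fun p => rfl)
  -- marginal identities
  have mid : ∀ i : Fin N, (∑ t : S × Fin K, w i t * a i t)
      = (∑ z, q i z * (Real.log (px i z) - Real.log (q i z)))
        + ∑ z, q i z * ∑ k, r k z *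
            (Real.log (pz z k) + Real.log (π k) - Real.log (r k z)) := by
    intro i
    calc (∑ t : S × Fin K, w i t * a i t)
        = ∑ z, ∑ k, w i (z, k) * a i (z, k) := Fintype.sum_prod_type _
      _ = ∑ z, (q i z * (Real.log (px i z) - Real.log (q i z))
            + q i z * ∑ k, r k z *
                (Real.log (pz z k) + Real.log (π k) - Real.log (r k z))) := by
          refine Finset.sum_congr rfl fun z _ => ?_
          have h1 : ∀ k : Fin K, w i (z, k) * a i (z, k)
              = r k z * (q i z * (Real.log (px i z) - Real.log (q i z)))
                + q i z * (r k z *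
                    (Real.log (pz z k) + Real.log (π k) - Real.log (r k z))) := by
            intro k
            simp only [hw, ha]
            ring
          rw [Finset.sum_congr rfl fun k _ => h1 k, Finset.sum_add_distrib,
              ← Finset.sum_mul, hrsum z, one_mul, ← Finset.mul_sum]
      _ = _ := Finset.sum_add_distrib
  have pairlem : ∀ i j : Fin N,
      (∑ t : S × Fin K, ∑ t' : S × Fin K,
          (w i t * w j t') * (W i j * (if t.2 = t'.2 then (1:ℝ) else 0)))
      = ∑ z, ∑ z', q i z * q j z' * ∑ k, r k z * r k z' * W i j := by
    intro i j
    calc (∑ t : S × Fin K, ∑ t' : S × Fin K,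
          (w i t * w j t') * (W i j * (if t.2 = t'.2 then (1:ℝ) else 0)))
        = ∑ z, ∑ k, ∑ z', ∑ k', (w i (z, k) * w j (z', k')) *
            (W i j * (if k = k' then (1:ℝ) else 0)) := by
          rw [Fintype.sum_prod_type]
          exact Finset.sum_congr rfl fun z _ => Finset.sum_congr rfl fun k _ =>
            Fintype.sum_prod_type _
      _ = ∑ z, ∑ z', ∑ k, ∑ k', (w i (z, k) * w j (z', k')) *
            (W i j * (if k = k' then (1:ℝ) else 0)) :=
          Finset.sum_congr rfl fun z _ => Finset.sum_comm
      _ = ∑ z, ∑ z', q i z * q j z' * ∑ k, r k z * r k z' * W i j := by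
          refine Finset.sum_congr rfl fun z _ => Finset.sum_congr rfl fun z' _ => ?_
          have hin : ∀ k : Fin K, (∑ k', (w i (z, k) * w j (z', k')) *
              (W i j * (if k = k' then (1:ℝ) else 0)))
              = q i z * q j z' * (r k z * r k z' * W i j) := by
            intro k
            have hk : ∀ k' : Fin K, (w i (z, k) * w j (z', k')) *
                (W i j * (if k = k' then (1:ℝ) else 0))
                = if k = k' then (w i (z, k) * w j (z', k')) * W i j else 0 := by
              intro k'; by_cases h : k = k' <;> simp [h]
            rw [Finset.sum_congr rfl fun k' _ => hk k', Finset.sum_ite_eq]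
            simp only [Finset.mem_univ, if_true]
            simp only [hw]
            ring
          rw [Finset.sum_congr rfl fun k _ => hin k, ← Finset.mul_sum]
  -- main computation
  calc (∑ Z : Fin N → S, ∑ c : Fin N → Fin K,
        (∏ i, q i (Z i) * r (c i) (Z i)) *
          (Real.log ((1 / Ω * ∏ i, π (c i) * weightFn W c i) *
              ∏ i, px i (Z i) * pz (Z i) (c i)) -
            Real.log (∏ i, q i (Z i) * r (c i) (Z i))))
      = ∑ Z : Fin N → S, ∑ c : Fin N → Fin K,
          (∏ i, w i (Z i, c i)) * (-Real.log Ω + (∑ i, a i (Z i, c i)) +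
            ∑ i, ∑ j ∈ Finset.univ.erase i,
              W i j * (if c i = c j then (1:ℝ) else 0)) := by
        refine Finset.sum_congr rfl fun Z _ => Finset.sum_congr rfl fun c _ => ?_
        rw [hlog Z c]
    _ = ∑ g : Fin N → S × Fin K,
          (∏ i, w i (g i)) * (-Real.log Ω + (∑ i, a i (g i)) +
            ∑ i, ∑ j ∈ Finset.univ.erase i,
              W i j * (if (g i).2 = (g j).2 then (1:ℝ) else 0)) :=
        hequiv (fun g => (∏ i, w i (g i)) * (-Real.log Ω + (∑ i, a i (g i)) +
            ∑ i, ∑ j ∈ Finset.univ.erase i,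
              W i j * (if (g i).2 = (g j).2 then (1:ℝ) else 0)))
    _ = ∑ g : Fin N → S × Fin K,
          ((∏ i, w i (g i)) * (-Real.log Ω)
            + (∑ i, (∏ l, w l (g l)) * a i (g i))
            + ∑ i, ∑ j ∈ Finset.univ.erase i, (∏ l, w l (g l)) *
                (W i j * (if (g i).2 = (g j).2 then (1:ℝ) else 0))) := by
        refine Finset.sum_congr rfl fun g _ => ?_
        have h1 : (∏ i, w i (g i)) * (∑ i, a i (g i))
            = ∑ i, (∏ l, w l (g l)) * a i (g i) := Finset.mul_sum _ _ _
        have h2 : (∏ i, w i (g i)) * (∑ i, ∑ j ∈ Finset.univ.erase i,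
              W i j * (if (g i).2 = (g j).2 then (1:ℝ) else 0))
            = ∑ i, ∑ j ∈ Finset.univ.erase i, (∏ l, w l (g l)) *
                (W i j * (if (g i).2 = (g j).2 then (1:ℝ) else 0)) := by
          rw [Finset.mul_sum]
          exact Finset.sum_congr rfl fun i _ => Finset.mul_sum _ _ _
        rw [mul_add, mul_add, h1, h2]
    _ = (∑ g : Fin N → S × Fin K, (∏ i, w i (g i)) * (-Real.log Ω))
        + (∑ i, ∑ g : Fin N → S × Fin K, (∏ l, w l (g l)) * a i (g i))
        + ∑ i, ∑ j ∈ Finset.univ.erase i, ∑ g : Fin N → S × Fin K,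
            (∏ l, w l (g l)) * (W i j * (if (g i).2 = (g j).2 then (1:ℝ) else 0)) := by
        rw [Finset.sum_add_distrib, Finset.sum_add_distrib]
        congr 1
        · congr 1
          exact Finset.sum_comm
        · rw [Finset.sum_comm]
          exact Finset.sum_congr rfl fun i _ => Finset.sum_comm
    _ = -Real.log Ω
        + (∑ i, ∑ t : S × Fin K, w i t * a i t)
        + ∑ i, ∑ j ∈ Finset.univ.erase i, ∑ t : S × Fin K, ∑ t' : S × Fin K,
            (w i t * w j t') * (W i j * (if t.2 = t'.2 then (1:ℝ) else 0)) := by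
        congr 1
        · congr 1
          · rw [← Finset.sum_mul, sum_prod_fun]
            rw [Finset.prod_congr rfl fun i _ => hwsum i]
            simp
          · exact Finset.sum_congr rfl fun i _ => marg1 w hwsum i (a i)
        · refine Finset.sum_congr rfl fun i _ => Finset.sum_congr rfl fun j hj => ?_
          exact marg2 w hwsum i j (Finset.ne_of_mem_erase hj)
            (fun t t' => W i j * (if t.2 = t'.2 then (1:ℝ) else 0))
    _ = _ := by
        have m : (∑ i, ∑ t : S × Fin K, w i t * a i t)
            = ∑ i, ((∑ z, q i z * (Real.log (px i z) - Real.log (q i z)))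
              + ∑ z, q i z * ∑ k, r k z *
                  (Real.log (pz z k) + Real.log (π k) - Real.log (r k z))) :=
          Finset.sum_congr rfl fun i _ => mid i
        have p : (∑ i, ∑ j ∈ Finset.univ.erase i, ∑ t : S × Fin K, ∑ t' : S × Fin K,
              (w i t * w j t') * (W i j * (if t.2 = t'.2 then (1:ℝ) else 0)))
            = ∑ i, ∑ j ∈ Finset.univ.erase i, ∑ z, ∑ z', q i z * q j z' *
                ∑ k, r k z * r k z' * W i j :=
          Finset.sum_congr rfl fun i _ => Finset.sum_congr rfl fun j _ => pairlem i j
        rw [m, p, Finset.sum_add_distrib]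
        ring
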